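/- Let p be an odd prime, q = p^e a power of p, and n a positive odd integer not divisible by p. Let γ be an integer, τ the least positive integer with γ·q^τ ≡ γ (mod n), and assume q^τ ≡ 3 (mod 4); set v = v_2(q^τ + 1). Then for every nonzero integer δ with δ ≡ γ (mod n) and every N ≥ 0, the size of the q-cyclotomic coset modulo 2^N n containing δ equals τ if N ≤ v_2(δ) + 1, and equals τ·2^{max(1, N − v_2(δ) − v)} if N > v_2(δ) + 1. -/

import Mathlib

lemma two_pow_dvd_two_pow_mul_odd_iff {b N : ℕ} {u : ℤ} (hu : Odd u) :
    (2:ℤ)^N ∣ 2^b * u ↔ N ≤ b := by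
  constructor
  · intro h
    by_contra hlt
    push_neg at hlt
    have h2 : (2:ℤ)^b * 2 ∣ 2^b * u := by
      refine dvd_trans ?_ h
      rw [← pow_succ]
      exact pow_dvd_pow 2 hlt
    have : (2:ℤ) ∣ u := (mul_dvd_mul_iff_left (by positivity : (2:ℤ)^b ≠ 0)).mp h2
    exact (Int.not_even_iff_odd.mpr hu) (even_iff_two_dvd.mpr this)
  · intro h
    exact Dvd.dvd.mul_right (pow_dvd_pow 2 h) u

lemma exists_two_pow_mul_odd {δ : ℤ} (hδ : δ ≠ 0) :
    ∃ u : ℤ, Odd u ∧ δ = 2 ^ (padicValInt 2 δ) * u := by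
  set d := padicValInt 2 δ with hd
  have h1 : (2:ℤ) ^ d ∣ δ := (padicValInt_dvd_iff _ _).mpr (Or.inr le_rfl)
  obtain ⟨u, hu⟩ := h1
  refine ⟨u, ?_, hu⟩
  rw [Int.not_even_iff_odd.symm, even_iff_two_dvd]
  intro h2
  have : (2:ℤ) ^ (d + 1) ∣ δ := by
    rw [hu, pow_succ]
    exact mul_dvd_mul_left _ h2
  rcases (padicValInt_dvd_iff _ _).mp this with h | h
  · exact hδ h
  · rw [← hd] at h; omega

section Qlem
variable {Q : ℤ} (hQ : Q ≡ 3 [ZMOD 4])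
include hQ

lemma Q_odd : Odd Q := by
  obtain ⟨t, ht⟩ := (Int.modEq_iff_dvd.mp hQ)
  exact ⟨1 - 2*t, by linarith⟩

lemma Q_pow_odd_mod4 {m : ℕ} (hm : Odd m) : Q^m ≡ 3 [ZMOD 4] := by
  have h1 : Q ≡ -1 [ZMOD 4] := hQ.trans (by decide)
  have h2 : Q^m ≡ (-1)^m [ZMOD 4] := h1.pow m
  rw [hm.neg_one_pow] at h2
  exact h2.trans (by decide)

lemma Q_pow_odd_sub_one {m : ℕ} (hm : Odd m) :
    ∃ u : ℤ, Odd u ∧ Q^m - 1 = 2*u := by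
  obtain ⟨t, ht⟩ := Int.modEq_iff_dvd.mp (Q_pow_odd_mod4 hQ hm)
  exact ⟨1 - 2*t, ⟨-t, by ring⟩, by linarith⟩

lemma Q_pow_odd_add_one {m : ℕ} (hm : Odd m) :
    ∃ c : ℤ, Odd c ∧ Q^m + 1 = (Q+1)*c := by
  refine ⟨∑ i ∈ Finset.range m, (-Q)^i, ?_, ?_⟩
  · have h2 : (2:ℤ) ∣ (∑ i ∈ Finset.range m, (-Q)^i) - m := by
      have hm' : (m:ℤ) = ∑ _i ∈ Finset.range m, (1:ℤ) := by simp
      rw [hm', ← Finset.sum_sub_distrib]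
      refine Finset.dvd_sum ?_
      intro i _
      obtain ⟨k, hk⟩ := (Odd.pow ((Q_odd hQ).neg) : Odd ((-Q)^i))
      exact ⟨k, by rw [hk]; ring⟩
    obtain ⟨k, hk⟩ := h2
    obtain ⟨j, hj⟩ := hm
    refine ⟨k + j, by push_cast [hj] at hk ⊢; linarith⟩
  · have hgs := geom_sum_mul (-Q) m
    have hneg : (-Q)^m = -(Q^m) := hm.neg_pow Q
    rw [hneg] at hgs
    nlinarith [hgs]

lemma Q_pow_even_add_one (t : ℕ) :
    ∃ u : ℤ, Odd u ∧ Q^(2*t) + 1 = 2*u := by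
  obtain ⟨k, hk⟩ := Odd.pow (Q_odd hQ) (n := t)
  refine ⟨2*k^2 + 2*k + 1, ⟨k^2 + k, by ring⟩, ?_⟩
  have : Q^(2*t) = (Q^t)^2 := by rw [← pow_mul, mul_comm]
  rw [this, hk]; ring

lemma Q_main {v : ℕ} {w : ℤ} (hw : Odd w) (hQw : Q + 1 = 2^v * w) :
    ∀ s : ℕ, 1 ≤ s → ∀ m : ℕ, Odd m →
      ∃ u : ℤ, Odd u ∧ Q^(2^s * m) - 1 = 2^(v + s) * u := by
  intro s hs
  induction s, hs using Nat.le_induction with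
  | base =>
    intro m hm
    obtain ⟨u1, hu1, h1⟩ := Q_pow_odd_sub_one hQ hm
    obtain ⟨c, hc, h2⟩ := Q_pow_odd_add_one hQ hm
    refine ⟨u1 * (w * c), hu1.mul (hw.mul hc), ?_⟩
    have key : Q^(2^1 * m) - 1 = (Q^m - 1) * (Q^m + 1) := by
      rw [show 2^1 * m = m * 2 from by ring, pow_mul]; ring
    rw [key, h1, h2, hQw]; ring
  | succ s hs ih =>
    intro m hm
    obtain ⟨u, hu, h1⟩ := ih m hm
    obtain ⟨u', hu', h2⟩ := Q_pow_even_add_one hQ (2^(s-1) * m)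
    have hexp : 2 * (2^(s-1) * m) = 2^s * m := by
      rw [← mul_assoc, ← pow_succ']
      congr 2
      omega
    rw [hexp] at h2
    refine ⟨u * u', hu.mul hu', ?_⟩
    have key : Q^(2^(s+1) * m) - 1 = (Q^(2^s * m) - 1) * (Q^(2^s * m) + 1) := by
      rw [show 2^(s+1) * m = (2^s * m) * 2 from by ring, pow_mul]; ring
    rw [key, h1, h2]; ring

end Qlem

lemma tau_dvd_iff {n : ℕ} {q γ : ℤ} {τ : ℕ} (hcop : IsCoprime (n:ℤ) q)
    (hτ : IsLeast {t : ℕ | 0 < t ∧ γ * q ^ t ≡ γ [ZMOD (n : ℤ)]} τ) :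
    ∀ j : ℕ, ((n:ℤ) ∣ γ * (q^j - 1)) ↔ τ ∣ j := by
  have hPτ : (n:ℤ) ∣ γ * (q^τ - 1) := by
    have := Int.modEq_iff_dvd.mp hτ.1.2
    have h2 : γ - γ * q ^ τ = -(γ * (q^τ - 1)) := by ring
    rw [h2, dvd_neg] at this
    exact this
  have hmul : ∀ a : ℕ, (n:ℤ) ∣ γ * (q^(τ*a) - 1) := by
    intro a
    induction a with
    | zero => simp
    | succ a ih =>
      have key : γ * (q^(τ*(a+1)) - 1)
          = γ * (q^(τ*a) - 1) * q^τ + γ * (q^τ - 1) := by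
        rw [Nat.mul_add, mul_one, pow_add]; ring
      rw [key]
      exact dvd_add (ih.mul_right _) hPτ
  intro j
  constructor
  · intro hPj
    set a := j / τ with ha
    set r := j % τ with hr
    have hja : j = τ * a + r := (Nat.div_add_mod j τ).symm
    have hPr : (n:ℤ) ∣ γ * (q^r - 1) := by
      have key : q^(τ*a) * (γ * (q^r - 1))
          = γ * (q^j - 1) - γ * (q^(τ*a) - 1) := by
        rw [hja, pow_add]; ring
      have hdvd : (n:ℤ) ∣ q^(τ*a) * (γ * (q^r - 1)) := by
        rw [key]; exact dvd_sub hPj (hmul a)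
      exact (hcop.pow_right).dvd_of_dvd_mul_left hdvd
    by_contra hndvd
    have hr0 : r ≠ 0 := by
      intro h0
      exact hndvd (Nat.dvd_of_mod_eq_zero (hr ▸ h0))
    have hrmem : r ∈ {t : ℕ | 0 < t ∧ γ * q ^ t ≡ γ [ZMOD (n : ℤ)]} := by
      refine ⟨Nat.pos_of_ne_zero hr0, ?_⟩
      rw [Int.modEq_iff_dvd]
      have h2 : γ - γ * q ^ r = -(γ * (q^r - 1)) := by ring
      rw [h2, dvd_neg]
      exact hPr
    have := hτ.2 hrmem
    have hlt : r < τ := Nat.mod_lt _ hτ.1.1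
    omega
  · rintro ⟨a, rfl⟩
    exact hmul a

theorem stmt_17 (p e q n : ℕ) (hp : p.Prime) (hp2 : p ≠ 2) (he : 0 < e) (hq : q = p ^ e)
    (hn : 0 < n) (hnodd : Odd n) (hnp : ¬ p ∣ n)
    (γ : ℤ) (τ : ℕ)
    (hτ : IsLeast {t : ℕ | 0 < t ∧ γ * (q : ℤ) ^ t ≡ γ [ZMOD (n : ℤ)]} τ)
    (hq4 : (q : ℤ) ^ τ ≡ 3 [ZMOD 4]) :
    ∀ δ : ℤ, δ ≠ 0 → δ ≡ γ [ZMOD (n : ℤ)] → ∀ N : ℕ,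
      (N ≤ padicValInt 2 δ + 1 →
        IsLeast {j : ℕ | 0 < j ∧ δ * (q : ℤ) ^ j ≡ δ [ZMOD ((2 ^ N * n : ℕ) : ℤ)]} τ) ∧
      (padicValInt 2 δ + 1 < N →
        IsLeast {j : ℕ | 0 < j ∧ δ * (q : ℤ) ^ j ≡ δ [ZMOD ((2 ^ N * n : ℕ) : ℤ)]}
          (τ * 2 ^ max 1 (N - (padicValInt 2 δ + padicValInt 2 ((q : ℤ) ^ τ + 1))))) := by
  intro δ hδ0 hδγ N
  have hτpos : 0 < τ := hτ.1.1
  set d := padicValInt 2 δ with hd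
  set Q : ℤ := (q : ℤ) ^ τ with hQdef
  set v := padicValInt 2 (Q + 1) with hv
  -- basic positivity
  have hqpos : 0 < q := hq ▸ pow_pos hp.pos e
  have hQpos : 0 < Q := by positivity
  have hQ1ne : Q + 1 ≠ 0 := by positivity
  -- coprimality of n with q and with 2
  have hcop : IsCoprime (n:ℤ) (q:ℤ) := by
    rw [Nat.isCoprime_iff_coprime]
    exact Nat.Coprime.symm (hq ▸ Nat.Coprime.pow_left e (hp.coprime_iff_not_dvd.mpr hnp))
  have hcop2 : IsCoprime ((2:ℤ)^N) (n:ℤ) := by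
    have h2 : ((2:ℤ)^N) = (((2^N : ℕ) : ℤ)) := by push_cast; ring
    rw [h2, Nat.isCoprime_iff_coprime]
    exact Nat.Coprime.pow_left N (Nat.coprime_two_left.mpr hnodd)
  -- decompositions
  obtain ⟨u, hu, hδu⟩ := exists_two_pow_mul_odd hδ0
  obtain ⟨w, hw, hQw⟩ := exists_two_pow_mul_odd hQ1ne
  rw [← hv] at hQw
  -- v ≥ 2
  have hv2 : 2 ≤ v := by
    have h4 : (4:ℤ) ∣ Q + 1 := by
      obtain ⟨t, ht⟩ := Int.modEq_iff_dvd.mp hq4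
      exact ⟨1 - t, by linarith⟩
    have : (2:ℤ)^2 ∣ Q + 1 := by norm_num; exact h4
    rcases (padicValInt_dvd_iff 2 (Q+1)).mp this with h | h
    · exact absurd h hQ1ne
    · exact hv ▸ h
  -- tau characterization
  have hchar := tau_dvd_iff hcop hτ
  have hδn : ∀ j : ℕ, ((n:ℤ) ∣ δ * ((q:ℤ)^j - 1)) ↔ τ ∣ j := by
    intro j
    rw [← hchar j]
    have hng : (n:ℤ) ∣ γ - δ := Int.modEq_iff_dvd.mp hδγ
    constructor
    · intro h
      have : γ * ((q:ℤ)^j - 1) = δ * ((q:ℤ)^j - 1) + (γ - δ) * ((q:ℤ)^j - 1) := by ring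
      rw [this]; exact dvd_add h (hng.mul_right _)
    · intro h
      have : δ * ((q:ℤ)^j - 1) = γ * ((q:ℤ)^j - 1) - (γ - δ) * ((q:ℤ)^j - 1) := by ring
      rw [this]; exact dvd_sub h (hng.mul_right _)
  -- membership characterization
  have hmem : ∀ j : ℕ, (δ * (q : ℤ) ^ j ≡ δ [ZMOD ((2 ^ N * n : ℕ) : ℤ)])
      ↔ (τ ∣ j ∧ (2:ℤ)^N ∣ δ * ((q:ℤ)^j - 1)) := by
    intro j
    rw [Int.modEq_iff_dvd]
    have h1 : δ - δ * (q:ℤ)^j = -(δ * ((q:ℤ)^j - 1)) := by ring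
    rw [h1, dvd_neg]
    have h2 : (((2:ℕ) ^ N * n : ℕ) : ℤ) = (2:ℤ)^N * (n:ℤ) := by push_cast; ring
    rw [h2]
    constructor
    · intro h
      exact ⟨(hδn j).mp ((dvd_mul_left (n:ℤ) _).trans h),
        (dvd_mul_right _ _).trans h⟩
    · rintro ⟨h1', h2'⟩
      exact hcop2.mul_dvd h2' ((hδn j).mpr h1')
  -- the 2-adic divisibility test
  have htest : ∀ (a : ℕ) (y : ℤ), Odd y → ∀ x : ℤ, x = 2^a * y →
      (((2:ℤ)^N ∣ δ * x) ↔ N ≤ d + a) := by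
    intro a y hy x hx
    have : δ * x = 2^(d+a) * (u * y) := by rw [hx, hδu, pow_add]; ring
    rw [this]
    exact two_pow_dvd_two_pow_mul_odd_iff (hu.mul hy)
  -- Q facts
  have hQ4' : Q ≡ 3 [ZMOD 4] := hq4
  constructor
  · -- case N ≤ d + 1
    intro hN
    constructor
    · refine ⟨hτpos, (hmem τ).mpr ⟨dvd_refl τ, ?_⟩⟩
      obtain ⟨u1, hu1, h1⟩ := Q_pow_odd_sub_one hQ4' (odd_one)
      rw [pow_one] at h1
      refine (htest 1 u1 hu1 ((q:ℤ)^τ - 1) (by rw [← hQdef, h1]; ring)).mpr hN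
    · intro j hj
      obtain ⟨hj0, hjm⟩ := hj
      exact Nat.le_of_dvd hj0 ((hmem j).mp hjm).1
  · -- case d + 1 < N
    intro hN
    set M := max 1 (N - (d + v)) with hM
    have hM1 : 1 ≤ M := le_max_left _ _
    have hM2 : N - (d + v) ≤ M := le_max_right _ _
    constructor
    · refine ⟨by positivity, (hmem (τ * 2^M)).mpr ⟨Dvd.intro _ rfl, ?_⟩⟩
      obtain ⟨y, hy, hyeq⟩ := Q_main hQ4' hw hQw M hM1 1 odd_one
      rw [mul_one] at hyeq
      have hx : (q:ℤ)^(τ * 2^M) - 1 = 2^(v+M) * y := by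
        rw [pow_mul, ← hQdef]; exact hyeq
      refine (htest (v+M) y hy _ hx).mpr (by omega)
    · intro j hj
      obtain ⟨hj0, hjm⟩ := hj
      obtain ⟨hτj, h2j⟩ := (hmem j).mp hjm
      obtain ⟨k, rfl⟩ := hτj
      have hk0 : k ≠ 0 := by rintro rfl; simp at hj0
      obtain ⟨s, m, hm, hkm⟩ := Nat.exists_eq_two_pow_mul_odd hk0
      have hqQ : (q:ℤ)^(τ * k) = Q^k := by rw [pow_mul, hQdef]
      rcases Nat.eq_zero_or_pos s with hs0 | hs1
      · exfalso
        subst hs0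
        rw [pow_zero, one_mul] at hkm
        subst hkm
        obtain ⟨u1, hu1, h1⟩ := Q_pow_odd_sub_one hQ4' hm
        have := (htest 1 u1 hu1 ((q:ℤ)^(τ*k) - 1)
          (by rw [hqQ, h1]; ring)).mp h2j
        omega
      · obtain ⟨y, hy, hyeq⟩ := Q_main hQ4' hw hQw s hs1 m hm
        rw [← hkm] at hyeq
        have hNle : N ≤ d + (v + s) := (htest (v+s) y hy ((q:ℤ)^(τ*k) - 1)
          (by rw [hqQ, hyeq])).mp h2j
        have hMs : M ≤ s := max_le hs1 (by omega)
        calc τ * 2^M ≤ τ * 2^s := Nat.mul_le_mul_left τ (Nat.pow_le_pow_right (by norm_num) hMs)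
          _ ≤ τ * (2^s * m) := Nat.mul_le_mul_left τ (Nat.le_mul_of_pos_right _ hm.pos)
          _ = τ * k := by rw [hkm]
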